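/- Let M ⊆ ℤ be a Maya diagram with associated partition λ of length ℓ. Then the minimal girth of M equals min{λ_{j+1} + j : 0 ≤ j ≤ ℓ}, where λ_{ℓ+1} := 0. -/

import Mathlib

/-- A Maya diagram: a set of integers containing only finitely many non-negative
integers and excluding only finitely many negative integers. -/
def IsMaya (M : Set ℤ) : Prop :=
  {m : ℤ | m ∈ M ∧ 0 ≤ m}.Finite ∧ {m : ℤ | m < 0 ∧ m ∉ M}.Finite

/-- The shifted Maya diagram `M - k = {m - k : m ∈ M}`. -/
def shiftM (M : Set ℤ) (k : ℤ) : Set ℤ := {m : ℤ | m + k ∈ M}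

/-- `M₊`, viewed as a subset of ℕ. -/
def MayaPlus (M : Set ℤ) : Set ℕ := {a : ℕ | (a : ℤ) ∈ M}

/-- `M₋ = {-m-1 : m < 0, m ∉ M}`, viewed as a subset of ℕ. -/
def MayaMinus (M : Set ℤ) : Set ℕ := {a : ℕ | (-(a : ℤ) - 1) ∉ M}

/-- The girth `|M| = #M₋ + #M₊`. -/
noncomputable def girth (M : Set ℤ) : ℕ := (MayaMinus M).ncard + (MayaPlus M).ncard

/-- Physicists' Hermite polynomial `H_n(x) = (-1)^n e^{x²} Dⁿ e^{-x²}`, as a real function. -/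
noncomputable def physHermite (n : ℕ) : ℝ → ℝ :=
  fun x => (-1 : ℝ) ^ n * Real.exp (x ^ 2) * iteratedDeriv n (fun y => Real.exp (-y ^ 2)) x

/-- The complex Hermite function `(-1)^n e^{z²} Dⁿ e^{-z²}`. -/
noncomputable def hermiteC (n : ℕ) : ℂ → ℂ :=
  fun z => (-1 : ℂ) ^ n * Complex.exp (z ^ 2) * iteratedDeriv n (fun w => Complex.exp (-w ^ 2)) z

/-- Conjugate Hermite polynomial `θ_n(x) = i^{-n} H_n(i x)`, as a real function. -/
noncomputable def conjHermite (n : ℕ) : ℝ → ℝ :=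
  fun x => (Complex.I ^ (-(n : ℤ)) * hermiteC n (Complex.I * x)).re

/-- The Hermite pseudo-Wronskian of a Maya diagram with Frobenius symbol
`(s₁,…,s_p | t₁,…,t_q)`:
`H_M(x) = e^{-p x²} · Wr[e^{x²}θ_{s₁}, …, e^{x²}θ_{s_p}, H_{t_q}, …, H_{t₁}](x)`.
Here `s i` is `s_{i+1}` and `t j` is `t_{j+1}` (0-based indexing). -/
noncomputable def pW (p q : ℕ) (s : Fin p → ℕ) (t : Fin q → ℕ) (x : ℝ) : ℝ :=
  Real.exp (-(p : ℝ) * x ^ 2) *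
    Matrix.det (Matrix.of fun i k : Fin (p + q) =>
      iteratedDeriv (k : ℕ)
        (fun y => if h : (i : ℕ) < p then Real.exp (y ^ 2) * conjHermite (s ⟨i, h⟩) y
          else physHermite (t ⟨p + q - 1 - (i : ℕ), by have := i.isLt; omega⟩) y) x)

/-- `(s₁,…,s_p | t₁,…,t_q)` is the Frobenius symbol of `M`. -/
def IsFrobenius {p q : ℕ} (M : Set ℤ) (s : Fin p → ℕ) (t : Fin q → ℕ) : Prop :=
  StrictAnti s ∧ StrictAnti t ∧ Set.range s = MayaMinus M ∧ Set.range t = MayaPlus M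

/-- `i_n = #{m ∉ M : m < n}`. -/
noncomputable def iN (M : Set ℤ) (n : ℤ) : ℕ := {m : ℤ | m ∉ M ∧ m < n}.ncard

/-- `j_n = #{m ∈ M : m ≥ n}`. -/
noncomputable def jN (M : Set ℤ) (n : ℤ) : ℕ := {m : ℤ | m ∈ M ∧ n ≤ m}.ncard

/-- `M` is in standard form. -/
def IsStandard (M : Set ℤ) : Prop := 0 ∉ M ∧ ∀ m : ℤ, m < 0 → m ∈ M

lemma MGaux_girth_shift (M : Set ℤ) (k : ℤ) :
    girth (shiftM M k) = iN M k + jN M k := by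
  unfold girth iN jN
  congr 1
  · have himg : {x : ℤ | x ∉ M ∧ x < k} = (fun a : ℕ => k - 1 - (a : ℤ)) '' MayaMinus (shiftM M k) := by
      ext x
      simp only [Set.mem_setOf_eq, Set.mem_image, MayaMinus, shiftM]
      constructor
      · rintro ⟨hx, hxk⟩
        refine ⟨(k - 1 - x).toNat, ?_, by omega⟩
        have h1 : (((k-1-x).toNat : ℤ)) = k - 1 - x := Int.toNat_of_nonneg (by omega)
        rw [h1, show -(k-1-x) - 1 + k = x by ring]
        exact hx
      · rintro ⟨a, ha, rfl⟩
        refine ⟨?_, by omega⟩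
        rw [show k - 1 - (a:ℤ) = -(a:ℤ) - 1 + k by ring]
        exact ha
    rw [himg, Set.ncard_image_of_injective _ (fun a b h => by omega)]
  · have himg : {x : ℤ | x ∈ M ∧ k ≤ x} = (fun a : ℕ => (a : ℤ) + k) '' MayaPlus (shiftM M k) := by
      ext x
      simp only [Set.mem_setOf_eq, Set.mem_image, MayaPlus, shiftM]
      constructor
      · rintro ⟨hx, hxk⟩
        refine ⟨(x - k).toNat, ?_, by omega⟩
        have h1 : (((x-k).toNat : ℤ)) = x - k := Int.toNat_of_nonneg (by omega)
        rw [h1, show x - k + k = x by ring]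
        exact hx
      · rintro ⟨a, ha, rfl⟩
        exact ⟨ha, by omega⟩
    rw [himg, Set.ncard_image_of_injective _ (fun a b h => by omega)]

lemma MGaux_fin_i (M : Set ℤ) (hM : IsMaya M) (k : ℤ) : {x : ℤ | x ∉ M ∧ x < k}.Finite := by
  apply Set.Finite.subset (hM.2.union (Set.finite_Ico 0 k))
  rintro x ⟨hx, hxk⟩
  rcases lt_or_ge x 0 with h | h
  · exact Or.inl ⟨h, hx⟩
  · exact Or.inr ⟨h, hxk⟩

lemma MGaux_fin_j (M : Set ℤ) (hM : IsMaya M) (k : ℤ) : {x : ℤ | x ∈ M ∧ k ≤ x}.Finite := by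
  apply Set.Finite.subset (hM.1.union (Set.finite_Ico k 0))
  rintro x ⟨hx, hxk⟩
  rcases lt_or_ge x 0 with h | h
  · exact Or.inr ⟨hxk, h⟩
  · exact Or.inl ⟨hx, h⟩

lemma MGaux_iN_mono (M : Set ℤ) (hM : IsMaya M) {k k' : ℤ} (h : k ≤ k') : iN M k ≤ iN M k' :=
  Set.ncard_le_ncard (fun x hx => ⟨hx.1, lt_of_lt_of_le hx.2 h⟩) (MGaux_fin_i M hM k')

lemma MGaux_jN_eq (M : Set ℤ) (hM : IsMaya M) (m : ℕ → ℤ) (hm : StrictAnti m)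
    (hrange : Set.range m = M) (j : ℕ) : jN M (m j + 1) = j := by
  unfold jN
  have hset : {x : ℤ | x ∈ M ∧ m j + 1 ≤ x} = m '' ↑(Finset.range j) := by
    ext x
    simp only [Set.mem_setOf_eq, Set.mem_image, Finset.coe_range, Set.mem_Iio]
    constructor
    · rintro ⟨hx, hxk⟩
      rw [← hrange] at hx
      obtain ⟨i, rfl⟩ := hx
      exact ⟨i, (hm.lt_iff_gt).mp (by omega), rfl⟩
    · rintro ⟨i, hi, rfl⟩
      exact ⟨hrange ▸ Set.mem_range_self i, by have := hm hi; omega⟩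
  rw [hset, Set.ncard_image_of_injective _ hm.injective, Set.ncard_coe_finset,
    Finset.card_range]

lemma MGaux_iN_eq (M : Set ℤ) (m : ℕ → ℤ) (hrange : Set.range m = M) (j : ℕ) :
    iN M (m j + 1) = {x : ℤ | x ∉ M ∧ x < m j}.ncard := by
  unfold iN
  congr 1
  ext x
  simp only [Set.mem_setOf_eq]
  constructor
  · rintro ⟨hx, hxk⟩
    refine ⟨hx, ?_⟩
    rcases eq_or_lt_of_le (show x ≤ m j by omega) with rfl | h
    · exact absurd (hrange ▸ Set.mem_range_self j) hx
    · exact h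
  · rintro ⟨hx, hxk⟩
    exact ⟨hx, by omega⟩

lemma MGaux_m_lt (M : Set ℤ) (hM : IsMaya M) (m : ℕ → ℤ) (hm : StrictAnti m)
    (hrange : Set.range m = M) (k : ℤ) : m (jN M k) < k := by
  by_contra h
  push_neg at h
  set j := jN M k with hj
  have hsub : m '' ↑(Finset.range (j + 1)) ⊆ {x : ℤ | x ∈ M ∧ k ≤ x} := by
    rintro x ⟨i, hi, rfl⟩
    simp only [Finset.coe_range, Set.mem_Iio] at hi
    exact ⟨hrange ▸ Set.mem_range_self i, le_trans h (hm.antitone (by omega))⟩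
  have := Set.ncard_le_ncard hsub (MGaux_fin_j M hM k)
  rw [Set.ncard_image_of_injective _ hm.injective, Set.ncard_coe_finset,
    Finset.card_range] at this
  unfold jN at hj
  omega

/-- Corollary `MGO`. The minimal girth of a Maya diagram equals
`min {λ_{j+1} + j : 0 ≤ j ≤ ℓ}`.  Here `lam` is the 0-based partition, so `lam j` is the
paper's `λ_{j+1}` (and `lam ℓ = 0`). -/
theorem minimal_girth_formula (M : Set ℤ) (hM : IsMaya M)
    (m : ℕ → ℤ) (hm : StrictAnti m) (hrange : Set.range m = M)
    (lam : ℕ → ℕ) (hlam : ∀ i : ℕ, lam i = {x : ℤ | x ∉ M ∧ x < m i}.ncard)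
    (ℓ : ℕ) (hlen : ∀ i : ℕ, 0 < lam i ↔ i < ℓ) :
    sInf {g : ℕ | ∃ k : ℤ, g = girth (shiftM M k)} =
      sInf {g : ℕ | ∃ j : ℕ, j ≤ ℓ ∧ g = lam j + j} := by
  have hne2 : {g : ℕ | ∃ j : ℕ, j ≤ ℓ ∧ g = lam j + j}.Nonempty :=
    ⟨lam 0 + 0, 0, Nat.zero_le ℓ, rfl⟩
  have hne1 : {g : ℕ | ∃ k : ℤ, g = girth (shiftM M k)}.Nonempty :=
    ⟨girth (shiftM M 0), 0, rfl⟩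
  apply le_antisymm
  · apply le_csInf hne2
    rintro g ⟨j, hj, rfl⟩
    apply Nat.sInf_le
    refine ⟨m j + 1, ?_⟩
    rw [MGaux_girth_shift, MGaux_jN_eq M hM m hm hrange, MGaux_iN_eq M m hrange, ← hlam j]
  · apply le_csInf hne1
    rintro g ⟨k, rfl⟩
    rw [MGaux_girth_shift]
    by_cases hc : jN M k ≤ ℓ
    · calc sInf {g : ℕ | ∃ j : ℕ, j ≤ ℓ ∧ g = lam j + j}
          ≤ lam (jN M k) + jN M k := Nat.sInf_le ⟨jN M k, hc, rfl⟩
        _ ≤ iN M k + jN M k := by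
          have h1 : lam (jN M k) = iN M (m (jN M k) + 1) := by
            rw [MGaux_iN_eq M m hrange]; exact hlam _
          rw [h1]
          exact Nat.add_le_add_right
            (MGaux_iN_mono M hM (by have := MGaux_m_lt M hM m hm hrange k; omega)) _
    · have hℓ : lam ℓ = 0 := by have := hlen ℓ; omega
      have hjk : ℓ < jN M k := by omega
      calc sInf {g : ℕ | ∃ j : ℕ, j ≤ ℓ ∧ g = lam j + j}
          ≤ lam ℓ + ℓ := Nat.sInf_le ⟨ℓ, le_refl ℓ, rfl⟩
        _ ≤ iN M k + jN M k := by omega
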